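/- Every dense subspace of a topological space with open disjoint tightness has open disjoint tightness. -/

import Mathlib

open Set Filter

/-- A space has open disjoint tightness (ODT) if every accumulation point of an open set `U`
is an accumulation point of two disjoint open subsets of `U`. -/
def HasODT (X : Type*) [TopologicalSpace X] : Prop :=
  ∀ U : Set X, IsOpen U → ∀ x : X, AccPt x (𝓟 U) →
    ∃ U₁ U₂ : Set X, IsOpen U₁ ∧ IsOpen U₂ ∧ U₁ ⊆ U ∧ U₂ ⊆ U ∧ U₁ ∩ U₂ = ∅ ∧
      AccPt x (𝓟 U₁) ∧ AccPt x (𝓟 U₂)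

/-- Proposition 18: every dense subspace of a space with open disjoint tightness has
open disjoint tightness. -/
theorem stmt_17 (X : Type*) [TopologicalSpace X] (h : HasODT X)
    (Y : Set X) (hY : Dense Y) : HasODT ↥Y := by
  intro U hU x hx
  obtain ⟨V, hV, rfl⟩ := isOpen_induced_iff.mp hU
  -- x.val is an accumulation point of V in X
  have hxV : AccPt (x : X) (𝓟 V) := by
    rw [accPt_iff_nhds] at hx ⊢
    intro N hN
    obtain ⟨y, ⟨hyN, hyV⟩, hyx⟩ := hx (Subtype.val ⁻¹' N)
      (mem_nhds_subtype Y x _ |>.mpr ⟨N, hN, subset_rfl⟩)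
    exact ⟨(y : X), ⟨hyN, hyV⟩, fun e => hyx (Subtype.ext e)⟩
  obtain ⟨V₁, V₂, hV₁, hV₂, hV₁V, hV₂V, hdisj, hacc₁, hacc₂⟩ := h V hV x hxV
  -- x ∉ V₁ and x ∉ V₂ (else a neighborhood of x inside one misses the other)
  have hx₁ : (x : X) ∉ V₁ := by
    intro hmem
    obtain ⟨y, ⟨hy₁, hy₂⟩, _⟩ := accPt_iff_nhds.mp hacc₂ V₁ (hV₁.mem_nhds hmem)
    have : y ∈ V₁ ∩ V₂ := ⟨hy₁, hy₂⟩
    rw [hdisj] at this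
    exact this
  have hx₂ : (x : X) ∉ V₂ := by
    intro hmem
    obtain ⟨y, ⟨hy₁, hy₂⟩, _⟩ := accPt_iff_nhds.mp hacc₁ V₂ (hV₂.mem_nhds hmem)
    have : y ∈ V₁ ∩ V₂ := ⟨hy₂, hy₁⟩
    rw [hdisj] at this
    exact this
  -- generic transfer: accumulation of an open set not containing x passes to Y
  have key : ∀ W : Set X, IsOpen W → (x : X) ∉ W → AccPt (x : X) (𝓟 W) →
      AccPt x (𝓟 (Subtype.val ⁻¹' W : Set Y)) := by
    intro W hW hxW haccW
    rw [accPt_iff_nhds] at haccW ⊢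
    intro N hN
    obtain ⟨M, hM, hMN⟩ := (mem_nhds_subtype Y x _).mp hN
    obtain ⟨M', hM'M, hM'open, hxM'⟩ := mem_nhds_iff.mp hM
    obtain ⟨z, ⟨hz1, hz2⟩, _⟩ := haccW M' (hM'open.mem_nhds hxM')
    obtain ⟨y, hyY, hyM', hyW⟩ := hY.exists_mem_open (hM'open.inter hW) ⟨z, hz1, hz2⟩
    refine ⟨⟨y, hyY⟩, ⟨hMN (hM'M hyM'), hyW⟩, fun e => ?_⟩
    have : y = (x : X) := congrArg Subtype.val e
    exact hxW (this ▸ hyW)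
  refine ⟨Subtype.val ⁻¹' V₁, Subtype.val ⁻¹' V₂,
    hV₁.preimage continuous_subtype_val, hV₂.preimage continuous_subtype_val,
    preimage_mono hV₁V, preimage_mono hV₂V, ?_, key V₁ hV₁ hx₁ hacc₁, key V₂ hV₂ hx₂ hacc₂⟩
  rw [← preimage_inter, hdisj, preimage_empty]
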